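/- Let H be a complex Hadamard matrix of order n, let B be a set of columns of H with |B| = b ≥ 1, and let c : {1,…,n} → ℂ be coefficients supported on B (c_j = 0 for j ∉ B). If the linear combination α of the columns of H given by α_i = Σ_j c_j H_{ij} is not the zero vector, then α has at least ⌈n/b⌉ non-zero entries. -/

import Mathlib

/-- Lemma 2.2 of Ó Catháin–Wanless: a non-zero linear combination of `b` columns of a
complex Hadamard matrix of order `n` has at least `⌈n/b⌉` non-zero entries. -/
theorem stmt_12 (n : ℕ) (H : Matrix (Fin n) (Fin n) ℂ)
    (hent : ∀ i j, ‖H i j‖ = 1)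
    (hHad : H * H.conjTranspose = (n : ℂ) • 1)
    (B : Finset (Fin n)) (b : ℕ) (hb : B.card = b) (hb1 : 1 ≤ b)
    (c : Fin n → ℂ) (hc : ∀ j ∉ B, c j = 0)
    (α : Fin n → ℂ) (hα : ∀ i, α i = ∑ j : Fin n, c j * H i j)
    (hne : α ≠ 0) :
    n ⌈/⌉ b ≤ Set.ncard {i : Fin n | α i ≠ 0} := by
  classical
  have hn : 0 < n := by
    rcases Nat.eq_zero_or_pos n with h | h
    · exact absurd (funext fun i => absurd i.2 (by omega)) hne
    · exact h
  have hnC : (n : ℂ) ≠ 0 := by exact_mod_cast hn.ne'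
  -- H* H = n • 1
  have hinv : H.conjTranspose * H = (n : ℂ) • 1 := by
    have h1 : H * ((n : ℂ)⁻¹ • H.conjTranspose) = 1 := by
      rw [Matrix.mul_smul, hHad, smul_smul, inv_mul_cancel₀ hnC, one_smul]
    have h2 : ((n : ℂ)⁻¹ • H.conjTranspose) * H = 1 := mul_eq_one_comm.mp h1
    have h3 : H.conjTranspose * H = (n:ℂ) • (((n : ℂ)⁻¹ • H.conjTranspose) * H) := by
      rw [Matrix.smul_mul, smul_smul, mul_inv_cancel₀ hnC, one_smul]
    rw [h3, h2]
  have hcol : ∀ j k : Fin n, ∑ i : Fin n, H i j * (starRingEnd ℂ) (H i k)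
      = if j = k then (n : ℂ) else 0 := by
    intro j k
    have h := congrFun (congrFun hinv k) j
    simp only [Matrix.mul_apply, Matrix.conjTranspose_apply, Matrix.smul_apply,
      Matrix.one_apply, smul_eq_mul, Complex.star_def] at h
    calc ∑ i : Fin n, H i j * (starRingEnd ℂ) (H i k)
        = ∑ i : Fin n, (starRingEnd ℂ) (H i k) * H i j :=
          Finset.sum_congr rfl fun i _ => mul_comm _ _
      _ = (n : ℂ) * if k = j then 1 else 0 := h
      _ = if j = k then (n : ℂ) else 0 := by
          by_cases hjk : j = k
          · subst hjk; simp
          · rw [if_neg (Ne.symm hjk), if_neg hjk, mul_zero]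
  -- Parseval
  have key : ∑ i : Fin n, α i * (starRingEnd ℂ) (α i)
      = (n : ℂ) * ∑ j : Fin n, c j * (starRingEnd ℂ) (c j) := by
    calc ∑ i : Fin n, α i * (starRingEnd ℂ) (α i)
        = ∑ i : Fin n, ∑ j : Fin n, ∑ k : Fin n,
            c j * (starRingEnd ℂ) (c k) * (H i j * (starRingEnd ℂ) (H i k)) := by
          refine Finset.sum_congr rfl fun i _ => ?_
          rw [hα i, map_sum, Finset.sum_mul_sum]
          refine Finset.sum_congr rfl fun j _ => Finset.sum_congr rfl fun k _ => ?_
          simp only [map_mul]; ring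
      _ = ∑ j : Fin n, ∑ k : Fin n,
            c j * (starRingEnd ℂ) (c k) * ∑ i : Fin n, H i j * (starRingEnd ℂ) (H i k) := by
          rw [Finset.sum_comm]
          refine Finset.sum_congr rfl fun j _ => ?_
          rw [Finset.sum_comm]
          refine Finset.sum_congr rfl fun k _ => ?_
          rw [Finset.mul_sum]
      _ = ∑ j : Fin n, ∑ k : Fin n,
            c j * (starRingEnd ℂ) (c k) * (if j = k then (n : ℂ) else 0) := by
          refine Finset.sum_congr rfl fun j _ => Finset.sum_congr rfl fun k _ => ?_
          rw [hcol]
      _ = ∑ j : Fin n, c j * (starRingEnd ℂ) (c j) * (n : ℂ) := by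
          refine Finset.sum_congr rfl fun j _ => ?_
          rw [Finset.sum_eq_single j]
          · simp
          · intro k _ hk; rw [if_neg (Ne.symm hk), mul_zero]
          · intro hj; exact absurd (Finset.mem_univ j) hj
      _ = (n : ℂ) * ∑ j : Fin n, c j * (starRingEnd ℂ) (c j) := by
          rw [← Finset.sum_mul]; ring
  set C : ℝ := ∑ j : Fin n, Complex.normSq (c j) with hC
  have hpar : ∑ i : Fin n, Complex.normSq (α i) = n * C := by
    have key2 : ((∑ i : Fin n, Complex.normSq (α i) : ℝ) : ℂ)
        = (((n : ℝ) * C : ℝ) : ℂ) := by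
      push_cast [hC]
      simpa [Complex.mul_conj] using key
    exact_mod_cast key2
  -- pointwise bound
  have hpt : ∀ i : Fin n, Complex.normSq (α i) ≤ (b : ℝ) * C := by
    intro i
    have h1 : ‖α i‖ ≤ ∑ j ∈ B, ‖c j‖ := by
      rw [hα i, ← Finset.sum_subset (Finset.subset_univ B)
        (fun j _ hj => by rw [hc j hj, zero_mul])]
      calc ‖∑ j ∈ B, c j * H i j‖
          ≤ ∑ j ∈ B, ‖c j * H i j‖ := by
            simpa using norm_sum_le B (fun j => c j * H i j)
        _ = ∑ j ∈ B, ‖c j‖ :=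
            Finset.sum_congr rfl fun j _ => by rw [norm_mul, hent, mul_one]
    have h2 : (∑ j ∈ B, ‖c j‖) ^ 2
        ≤ (b : ℝ) * ∑ j ∈ B, ‖c j‖ ^ 2 := by
      have := sq_sum_le_card_mul_sum_sq (s := B) (f := fun j => ‖c j‖)
      simpa [hb] using this
    have h3 : ∑ j ∈ B, ‖c j‖ ^ 2 = C := by
      rw [hC, ← Finset.sum_subset (Finset.subset_univ B)
        (fun j _ hj => by rw [hc j hj]; simp)]
      exact Finset.sum_congr rfl fun j _ => Complex.sq_norm (c j)
    calc Complex.normSq (α i) = ‖α i‖ ^ 2 := (Complex.sq_norm _).symm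
      _ ≤ (∑ j ∈ B, ‖c j‖) ^ 2 :=
          pow_le_pow_left₀ (norm_nonneg _) h1 2
      _ ≤ (b : ℝ) * C := by rw [← h3]; exact h2
  -- C > 0
  have hCpos : 0 < C := by
    by_contra h
    push_neg at h
    have hC0 : C = 0 := le_antisymm h (Finset.sum_nonneg fun j _ => Complex.normSq_nonneg _)
    apply hne
    funext i
    have hz := hpar
    rw [hC0, mul_zero] at hz
    exact Complex.normSq_eq_zero.mp ((Finset.sum_eq_zero_iff_of_nonneg
      (fun j _ => Complex.normSq_nonneg (α j))).mp hz i (Finset.mem_univ i))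
  -- support finset
  set S : Finset (Fin n) := Finset.univ.filter (fun i => α i ≠ 0) with hS
  have hncard : Set.ncard {i : Fin n | α i ≠ 0} = S.card := by
    rw [← Set.ncard_coe_finset]
    congr 1
    ext i; simp [hS]
  rw [hncard, ceilDiv_le_iff_le_mul hb1]
  have hsum : ∑ i : Fin n, Complex.normSq (α i) = ∑ i ∈ S, Complex.normSq (α i) := by
    rw [eq_comm]
    apply Finset.sum_subset (Finset.subset_univ S)
    intro i _ hi
    simp only [hS, Finset.mem_filter, Finset.mem_univ, true_and, not_not] at hi
    rw [hi]; simp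
  have hle : (n : ℝ) * C ≤ (S.card : ℝ) * ((b : ℝ) * C) := by
    rw [← hpar, hsum]
    calc ∑ i ∈ S, Complex.normSq (α i) ≤ ∑ i ∈ S, (b : ℝ) * C :=
          Finset.sum_le_sum fun i _ => hpt i
      _ = (S.card : ℝ) * ((b : ℝ) * C) := by rw [Finset.sum_const, nsmul_eq_mul]
  have key3 : (n : ℝ) ≤ (b : ℝ) * (S.card : ℝ) := by nlinarith
  exact_mod_cast key3
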